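/- Let f: G → G' be a closed immersion of smooth affine group schemes over a curve C over 𝔽_q. Then the diagonal morphism Δ of the induced morphism f_*: H¹(C,G) → H¹(C,G') of stacks of torsors, Δ: H¹(C,G) → H¹(C,G) ×_{H¹(C,G')} H¹(C,G), is a monomorphism of stacks; i.e., for every 𝔽_q-scheme S the functor Δ_S on fiber categories is fully faithful. -/

import Mathlib

universe u

open CategoryTheory CategoryTheory.Limits AlgebraicGeometry Opposite

/-- A presheaf of sets on the big étale site of `X` with a right action of a presheaf
of groups `G`. -/
structure ActionPresheaf (X : Scheme.{u}) (G : (Over X)ᵒᵖ ⥤ GrpCat.{u}) where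
  P : (Over X)ᵒᵖ ⥤ Type u
  act : ∀ T : (Over X)ᵒᵖ, P.obj T → (G.obj T) → P.obj T
  act_one : ∀ T x, act T x 1 = x
  act_mul : ∀ T x g h, act T x (g * h) = act T (act T x g) h
  naturality : ∀ {T T' : (Over X)ᵒᵖ} (f : T ⟶ T') (x : P.obj T) (g : G.obj T),
    P.map f (act T x g) = act T' (P.map f x) (G.map f g)

/-- The torsor condition on the big étale site. -/
def IsTorsor {X : Scheme.{u}} {G : (Over X)ᵒᵖ ⥤ GrpCat.{u}} (A : ActionPresheaf X G) : Prop :=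
  (∀ T, Function.Bijective
      (fun p : (G.obj T) × A.P.obj T => (A.act T p.2 p.1, p.2))) ∧
  (∃ (U : Scheme.{u}) (u : U ⟶ X), IsEtale u ∧ Surjective u ∧
      Nonempty (A.P.obj (op (Over.mk u))))

/-- The relation defining the contracted product `𝒢 ×^G G'`. -/
def CPRel {X : Scheme.{u}} {Ghat G'hat : (Over X)ᵒᵖ ⥤ GrpCat.{u}} (f : Ghat ⟶ G'hat)
    (A : ActionPresheaf X Ghat) (T : (Over X)ᵒᵖ) :
    (A.P.obj T × (G'hat.obj T)) → (A.P.obj T × (G'hat.obj T)) → Prop :=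
  fun a b => ∃ h : Ghat.obj T, a.1 = A.act T b.1 h ∧ a.2 = (f.app T h)⁻¹ * b.2

/-- Sections over `T` of the contracted product `f_*𝒢 = 𝒢 ×^G G'`. -/
def CP {X : Scheme.{u}} {Ghat G'hat : (Over X)ᵒᵖ ⥤ GrpCat.{u}} (f : Ghat ⟶ G'hat)
    (A : ActionPresheaf X Ghat) (T : (Over X)ᵒᵖ) : Type u :=
  Quot (CPRel f A T)

/-- The map induced on contracted products by an equivariant morphism of torsors. -/
def cpMap {X : Scheme.{u}} {Ghat G'hat : (Over X)ᵒᵖ ⥤ GrpCat.{u}} (f : Ghat ⟶ G'hat)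
    (A B : ActionPresheaf X Ghat) (φ : A.P ⟶ B.P)
    (hφ : ∀ T x g, φ.app T (A.act T x g) = B.act T (φ.app T x) g) (T : (Over X)ᵒᵖ) :
    CP f A T → CP f B T :=
  Quot.map (fun a => (φ.app T a.1, a.2)) (by
    rintro a b ⟨h, h1, h2⟩
    exact ⟨h, by simp only []; rw [h1]; exact hφ T b.1 h, h2⟩)

lemma cprel_equiv {X : Scheme.{u}} {Ghat G'hat : (Over X)ᵒᵖ ⥤ GrpCat.{u}} (f : Ghat ⟶ G'hat)
    (A : ActionPresheaf X Ghat) (T : (Over X)ᵒᵖ) : Equivalence (CPRel f A T) := by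
  constructor
  · intro a; exact ⟨1, by simp [A.act_one], by simp⟩
  · rintro a b ⟨h, h1, h2⟩
    exact ⟨h⁻¹, by rw [h1, ← A.act_mul, mul_inv_cancel, A.act_one],
      by rw [h2]; simp [mul_assoc]⟩
  · rintro a b cc ⟨h, h1, h2⟩ ⟨h', h1', h2'⟩
    exact ⟨h' * h, by rw [h1, h1', A.act_mul], by rw [h2, h2']; simp [mul_assoc]⟩

/-- Let `f : G → G'` be a closed immersion of smooth affine group schemes
over a curve `C` over `𝔽_q = k`.  The diagonal of the induced morphism
`f_* : H¹(C,G) → H¹(C,G')` of stacks of torsors is a monomorphism: for every `𝔽_q`-scheme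
`S` the functor `Δ_S` on fibre categories (groupoids of torsors on `C_S = C ×_k S`) is
fully faithful.  Concretely: for any two `G`-torsors `𝒢, 𝒢'` on `C_S` and any two
(iso)morphisms `φ, ψ : 𝒢 → 𝒢'` of torsors inducing the same morphism
`f_*𝒢 → f_*𝒢'` of contracted products, one has `φ = ψ`, which is exactly full
faithfulness of `Δ_S : 𝒢 ↦ (𝒢, 𝒢, id_{f_*𝒢})`. -/
theorem stmt14 (k : Type u) [Field k] (C : Scheme.{u})
    (c : C ⟶ Spec (CommRingCat.of k)) [IrreducibleSpace C]
    (Ghat G'hat : (Over C)ᵒᵖ ⥤ GrpCat.{u}) (f : Ghat ⟶ G'hat)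
    (G G' : Over C) [Smooth G.hom] [IsAffineHom G.hom] [Smooth G'.hom]
    [IsAffineHom G'.hom] (fs : G ⟶ G') [IsClosedImmersion fs.left]
    (e : (Ghat ⋙ forget GrpCat) ≅ yoneda.obj G)
    (e' : (G'hat ⋙ forget GrpCat) ≅ yoneda.obj G')
    (hcompat : Functor.whiskerRight f (forget GrpCat) ≫ e'.hom = e.hom ≫ yoneda.map fs) :
    -- for every 𝔽_q-scheme S, with C_S = C ×_k S and the groups restricted to C_S …
    ∀ (S : Scheme.{u}) (sS : S ⟶ Spec (CommRingCat.of k)),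
      ∀ (A B : ActionPresheaf (pullback c sS)
          ((Over.map (pullback.fst c sS)).op ⋙ Ghat)),
        IsTorsor A → IsTorsor B →
        ∀ (φ ψ : A.P ⟶ B.P)
          (hφ : ∀ T x g, φ.app T (A.act T x g) = B.act T (φ.app T x) g)
          (hψ : ∀ T x g, ψ.app T (A.act T x g) = B.act T (ψ.app T x) g),
          IsIso φ → IsIso ψ →
          (∀ T, cpMap (Functor.whiskerLeft (Over.map (pullback.fst c sS)).op f) A B φ hφ T =
                cpMap (Functor.whiskerLeft (Over.map (pullback.fst c sS)).op f) A B ψ hψ T) →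
          φ = ψ := by
  intro S sS A B hA hB φ ψ hφ hψ _ _ hcp
  -- `fs` is a monomorphism in `Over C` since its underlying morphism is a closed immersion
  have hmono : Mono fs := by
    have h1 : Mono fs.left := inferInstance
    exact (Over.forget C).mono_of_mono_map h1
  -- injectivity of `f.app T'` for every `T' : (Over C)ᵒᵖ`
  have hinj : ∀ T' : (Over C)ᵒᵖ, Function.Injective (f.app T') := by
    intro T' a b hab
    have hc := congrArg (fun n => n.app T') hcompat
    simp only [NatTrans.comp_app] at hc
    have hca := ConcreteCategory.congr_hom hc a
    have hcb := ConcreteCategory.congr_hom hc b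
    simp only [types_comp_apply, Functor.whiskerRight_app, Functor.comp_obj] at hca hcb
    have hfa : (forget GrpCat).map (f.app T') a = (forget GrpCat).map (f.app T') b := hab
    have h2 : e.hom.app T' a ≫ fs = e.hom.app T' b ≫ fs := by
      have := hca.symm.trans (congrArg (e'.hom.app T') hfa) |>.trans hcb
      simpa [yoneda] using this
    have h3 : e.hom.app T' a = e.hom.app T' b := (cancel_mono fs).mp h2
    have h4 : Function.Injective (e.hom.app T') :=
      ((isIso_iff_bijective _).mp inferInstance).injective
    exact h4 h3
  set f' := Functor.whiskerLeft (Over.map (pullback.fst c sS)).op f with hf'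
  ext T x
  -- compare the images of `(x, 1)` in the contracted products
  have key := congrFun (hcp T) (Quot.mk _ (x, 1))
  simp only [cpMap, Quot.map] at key
  have hrel : CPRel f' B T (φ.app T x, (1 : _)) (ψ.app T x, (1 : _)) :=
    ((cprel_equiv f' B T).eqvGen_iff).mp (Quot.eq.mp key)
  obtain ⟨h, h1, h2⟩ := hrel
  have hone : f'.app T h = 1 := by
    have : (f'.app T h)⁻¹ * 1 = 1 := h2.symm
    simpa using this.symm
  have hh : h = 1 := by
    have : f.app ((Over.map (pullback.fst c sS)).op.obj T) h =
        f.app ((Over.map (pullback.fst c sS)).op.obj T) 1 := by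
      simpa [hf', Functor.whiskerLeft] using hone
    exact hinj _ this
  simp only [] at h1
  change φ.app T x = ψ.app T x
  rw [h1, hh, B.act_one]
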